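/- Let A be a discrete valuation ring with maximal ideal m, fraction field K, and residue field k = A/m. Let M be a B-submodule of K with B = A (i.e., M is an A-submodule of K). If M ⊗_A k ≠ 0, then M is isomorphic to A as an A-module; conversely if M ≅ A then M ⊗_A k ≠ 0. -/

import Mathlib

open TensorProduct

/-- over a DVR `A` with fraction field `K` and residue field `k`, an `A`-submodule
`M` of `K` is isomorphic to `A` if and only if its reduction `k ⊗_A M` is nonzero. -/
theorem submodule_of_fractionField_free_iff_reduction_nonzero
    {A : Type*} [CommRing A] [IsDomain A] [IsDiscreteValuationRing A]
    (M : Submodule A (FractionRing A)) :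
    Nonempty (↥M ≃ₗ[A] A) ↔ Nontrivial (IsLocalRing.ResidueField A ⊗[A] ↥M) := by
  constructor
  · rintro ⟨e⟩
    have e2 : IsLocalRing.ResidueField A ⊗[A] ↥M ≃ₗ[A] IsLocalRing.ResidueField A :=
      (TensorProduct.congr (LinearEquiv.refl A _) e).trans (TensorProduct.rid A _)
    exact e2.toEquiv.nontrivial
  · intro h
    have e := TensorProduct.quotTensorEquivQuotSMul (↥M) (IsLocalRing.maximalIdeal A)
    haveI : Nontrivial ((A ⧸ IsLocalRing.maximalIdeal A) ⊗[A] ↥M) := h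
    have h2 : Nontrivial (↥M ⧸ (IsLocalRing.maximalIdeal A • (⊤ : Submodule A ↥M))) :=
      e.symm.toEquiv.nontrivial
    have hne : (IsLocalRing.maximalIdeal A • (⊤ : Submodule A ↥M)) ≠ ⊤ := by
      intro hEq
      rw [← Submodule.Quotient.subsingleton_iff] at hEq
      exact (not_subsingleton_iff_nontrivial.mpr h2) hEq
    obtain ⟨x, -, hx⟩ := SetLike.exists_of_lt hne.lt_top
    have hx0 : (x : FractionRing A) ≠ 0 := by
      intro h0
      apply hx
      have : x = 0 := Subtype.ext h0
      rw [this]; exact Submodule.zero_mem _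
    have hMeq : M = (Submodule.span A {(x : FractionRing A)}) := by
      apply le_antisymm
      · intro y hy
        by_cases hy0 : y = 0
        · rw [hy0]; exact Submodule.zero_mem _
        obtain ⟨c, hc⟩ | ⟨c, hc⟩ :=
          ValuationRing.isInteger_or_isInteger A (y / (x : FractionRing A))
        · -- y = c • x
          rw [eq_div_iff hx0] at hc
          exact Submodule.mem_span_singleton.mpr ⟨c, by
            rw [Algebra.smul_def, hc]⟩
        · rw [inv_div, eq_div_iff hy0] at hc
          -- algebraMap c * y = x
          by_cases hcu : IsUnit c
          · obtain ⟨u, rfl⟩ := hcu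
            refine Submodule.mem_span_singleton.mpr ⟨(↑u⁻¹ : Aˣ), ?_⟩
            rw [Algebra.smul_def, ← hc, ← mul_assoc, ← map_mul, Units.inv_mul, map_one,
              one_mul]
          · exfalso
            apply hx
            have hcm : c ∈ IsLocalRing.maximalIdeal A := hcu
            have : x = c • (⟨y, hy⟩ : ↥M) := by
              apply Subtype.ext
              simp [Algebra.smul_def, hc]
            rw [this]
            exact Submodule.smul_mem_smul hcm trivial
      · rw [Submodule.span_le, Set.singleton_subset_iff]
        exact x.2
    exact ⟨(LinearEquiv.ofEq M _ hMeq).trans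
      (LinearEquiv.toSpanNonzeroSingleton A (FractionRing A) (x : FractionRing A) hx0).symm⟩
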